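/- Let X and Y be real normed linear spaces with dim X > 2, and let x ∈ X be nonzero. Then for any bounded linear operator T : X → Y, there exists a subspace V of X with V ⊆ x^⊥_B (i.e., x is Birkhoff-James orthogonal to every element of V) of codimension 2 in X such that Tx is Birkhoff-James orthogonal to Tz for all z ∈ V. -/

import Mathlib

/-- Birkhoff-James orthogonality: `x ⊥_B y` iff `‖x + t • y‖ ≥ ‖x‖` for all real `t`. -/
def BJOrth {X : Type*} [NormedAddCommGroup X] [NormedSpace ℝ X] (x y : X) : Prop :=
  ∀ t : ℝ, ‖x‖ ≤ ‖x + t • y‖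

theorem stmt_0 {X Y : Type*} [NormedAddCommGroup X] [NormedSpace ℝ X]
    [NormedAddCommGroup Y] [NormedSpace ℝ Y]
    (hdim : 2 < Module.rank ℝ X) (x : X) (hx : x ≠ 0) (T : X →L[ℝ] Y) :
    ∃ V : Submodule ℝ X, (∀ v ∈ V, BJOrth x v) ∧
      Module.finrank ℝ (X ⧸ V) = 2 ∧
      ∀ z ∈ V, BJOrth (T x) (T z) := by
  -- Hahn-Banach functional supporting x
  obtain ⟨f, hf1, hf2⟩ := exists_dual_vector ℝ x (norm_ne_zero_iff.mpr hx)
  have hfx : f x ≠ 0 := by rw [hf2]; exact norm_ne_zero_iff.mpr hx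
  -- a functional g on Y with ‖g‖ ≤ 1 and g (T x) = ‖T x‖
  obtain ⟨g, hg1, hg2⟩ : ∃ g : Y →L[ℝ] ℝ, ‖g‖ ≤ 1 ∧ g (T x) = ‖T x‖ := by
    by_cases hTx : T x = 0
    · exact ⟨0, by simp, by simp [hTx]⟩
    · obtain ⟨g, h1, h2⟩ := exists_dual_vector ℝ (T x) (norm_ne_zero_iff.mpr hTx)
      exact ⟨g, le_of_eq h1, h2⟩
  set h : X →L[ℝ] ℝ := g.comp T with hh
  -- find a second functional k with k x = 0, k u ≠ 0, and ker f ⊓ ker k ⊆ ker h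
  obtain ⟨k, u, hkx, hku, hker⟩ :
      ∃ (k : X →L[ℝ] ℝ) (u : X), k x = 0 ∧ k u ≠ 0 ∧
        ∀ v : X, f v = 0 → k v = 0 → h v = 0 := by
    set h' : X →L[ℝ] ℝ := h - (h x / f x) • f with hh'
    by_cases hne : h' = 0
    · -- ker f ⊆ ker h; pick any nonzero w in ker f
      have hker_f : ∃ w : X, f w = 0 ∧ w ≠ 0 := by
        by_contra hc
        push_neg at hc
        have hinj : Function.Injective (f : X →ₗ[ℝ] ℝ) := by
          rw [← LinearMap.ker_eq_bot, LinearMap.ker_eq_bot']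
          intro m hm
          exact hc m hm
        have := (f : X →ₗ[ℝ] ℝ).lift_rank_le_of_injective hinj
        have h3 : Module.rank ℝ X ≤ 1 := by simpa using this
        have h2 : (2 : Cardinal) < 1 := lt_of_lt_of_le hdim h3
        norm_num at h2
      obtain ⟨w, hw0, hwne⟩ := hker_f
      obtain ⟨k₀, _, hk₀⟩ := exists_dual_vector ℝ w (norm_ne_zero_iff.mpr hwne)
      refine ⟨k₀ - (k₀ x / f x) • f, w, by simp [div_mul_cancel₀ _ hfx], ?_, ?_⟩
      · simp only [ContinuousLinearMap.sub_apply, ContinuousLinearMap.smul_apply, smul_eq_mul,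
          hw0, mul_zero, sub_zero, hk₀]
        exact norm_ne_zero_iff.mpr hwne
      · intro v hfv hkv
        have hv' : h' v = 0 := by rw [hne]; simp
        simp only [hh', ContinuousLinearMap.sub_apply, ContinuousLinearMap.smul_apply,
          smul_eq_mul, hfv, mul_zero, sub_zero] at hv'
        exact hv'
    · obtain ⟨u, hu⟩ : ∃ u, h' u ≠ 0 := by
        by_contra hc
        push_neg at hc
        exact hne (by ext v; simp [hc v])
      refine ⟨h', u, ?_, hu, ?_⟩
      · simp [hh', div_mul_cancel₀ _ hfx]
      · intro v hfv hkv
        simp only [hh', ContinuousLinearMap.sub_apply, ContinuousLinearMap.smul_apply,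
          smul_eq_mul, hfv, mul_zero, sub_zero] at hkv
        exact hkv
  -- the map φ = (f, k) : X → ℝ × ℝ
  set φ : X →ₗ[ℝ] ℝ × ℝ := (f : X →ₗ[ℝ] ℝ).prod (k : X →ₗ[ℝ] ℝ) with hφ
  have hsurj : Function.Surjective φ := by
    rintro ⟨a, b⟩
    set u' : X := u - (f u / f x) • x with hu'
    have hfu' : f u' = 0 := by
      simp [hu', map_sub, map_smul, div_mul_cancel₀ _ hfx]
    have hku' : k u' = k u := by
      simp [hu', map_sub, map_smul, hkx]
    refine ⟨(a / f x) • x + (b / k u) • u', ?_⟩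
    have h1 : f ((a / f x) • x + (b / k u) • u') = a := by
      simp [map_add, map_smul, hfu', div_mul_cancel₀ _ hfx]
    have h2 : k ((a / f x) • x + (b / k u) • u') = b := by
      simp [map_add, map_smul, hkx, hku', div_mul_cancel₀ _ hku]
    exact Prod.ext h1 h2
  refine ⟨LinearMap.ker φ, ?_, ?_, ?_⟩
  · -- BJ orthogonality of x to ker φ
    intro v hv t
    have hfv : f v = 0 := congrArg Prod.fst hv
    have : f (x + t • v) = ‖x‖ := by
      simp [map_add, map_smul, hfv, hf2]
    calc ‖x‖ = f (x + t • v) := this.symm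
      _ ≤ ‖f (x + t • v)‖ := le_abs_self _
      _ ≤ ‖f‖ * ‖x + t • v‖ := f.le_opNorm _
      _ = ‖x + t • v‖ := by rw [hf1, one_mul]
  · -- codimension 2
    have e := φ.quotKerEquivRange
    have hr : LinearMap.range φ = ⊤ := LinearMap.range_eq_top.mpr hsurj
    rw [e.finrank_eq, hr, finrank_top]
    simp [Module.finrank_prod]
  · -- BJ orthogonality of T x to T z
    intro z hz t
    have hfz : f z = 0 := congrArg Prod.fst hz
    have hkz : k z = 0 := congrArg Prod.snd hz
    have hhz : h z = 0 := hker z hfz hkz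
    have hgTz : g (T z) = 0 := hhz
    have : g (T x + t • T z) = ‖T x‖ := by
      simp [map_add, map_smul, hgTz, hg2]
    calc ‖T x‖ = g (T x + t • T z) := this.symm
      _ ≤ ‖g (T x + t • T z)‖ := le_abs_self _
      _ ≤ ‖g‖ * ‖T x + t • T z‖ := g.le_opNorm _
      _ ≤ 1 * ‖T x + t • T z‖ := by
          exact mul_le_mul_of_nonneg_right hg1 (norm_nonneg _)
      _ = ‖T x + t • T z‖ := one_mul _
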